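/- Two connected graphs G and H are both extreme geodesic (their sets of simplicial vertices are geodetic) if and only if G ⊠ H is extreme geodesic. In particular, if G and H are extreme geodesic, then g(G ⊠ H) = h(G ⊠ H) = g(G)·g(H). -/

import Mathlib

open SimpleGraph

/-- The strong product of two simple graphs. -/
def strongProd {α β : Type*} (G : SimpleGraph α) (H : SimpleGraph β) :
    SimpleGraph (α × β) where
  Adj x y := x ≠ y ∧ (x.1 = y.1 ∨ G.Adj x.1 y.1) ∧ (x.2 = y.2 ∨ H.Adj x.2 y.2)
  symm := by
    constructor
    rintro x y ⟨hne, h1, h2⟩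
    exact ⟨hne.symm, h1.imp Eq.symm G.adj_symm, h2.imp Eq.symm H.adj_symm⟩
  loopless := by constructor; rintro x ⟨hne, -, -⟩; exact hne rfl

/-- The closed geodesic interval between two vertices. -/
def interval {V : Type*} (G : SimpleGraph V) (u v : V) : Set V :=
  {w | G.dist u w + G.dist w v = G.dist u v}

/-- The geodetic closure of a set of vertices. -/
def intervalSet {V : Type*} (G : SimpleGraph V) (S : Set V) : Set V :=
  ⋃ u ∈ S, ⋃ v ∈ S, interval G u v

/-- A set is geodetic if its geodetic closure is the whole vertex set. -/
def IsGeodetic {V : Type*} (G : SimpleGraph V) (S : Set V) : Prop :=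
  intervalSet G S = Set.univ

/-- A set is a hull set if iterating the interval operator yields everything. -/
def IsHullSet {V : Type*} (G : SimpleGraph V) (S : Set V) : Prop :=
  ∃ r : ℕ, (intervalSet G)^[r] S = Set.univ

/-- The geodetic number. -/
noncomputable def geodeticNumber {V : Type*} (G : SimpleGraph V) : ℕ :=
  sInf {n : ℕ | ∃ S : Set V, S.ncard = n ∧ IsGeodetic G S}

/-- The hull number. -/
noncomputable def hullNumber {V : Type*} (G : SimpleGraph V) : ℕ :=
  sInf {n : ℕ | ∃ S : Set V, S.ncard = n ∧ IsHullSet G S}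

/-- A vertex is simplicial if its neighborhood induces a complete graph. -/
def IsSimplicial {V : Type*} (G : SimpleGraph V) (v : V) : Prop :=
  ∀ ⦃a b : V⦄, G.Adj v a → G.Adj v b → a ≠ b → G.Adj a b

/-- A graph is extreme geodesic if its set of simplicial vertices is geodetic. -/
def ExtremeGeodesic {V : Type*} (G : SimpleGraph V) : Prop :=
  IsGeodetic G {v | IsSimplicial G v}

section Aux
variable {α β : Type*} {G : SimpleGraph α} {H : SimpleGraph β}

lemma dist_fst_le (hG : G.Connected) {x y : α × β} (W : (strongProd G H).Walk x y) :
    G.dist x.1 y.1 ≤ W.length := by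
  induction W with
  | nil => simp
  | @cons a b c h W ih =>
    have h1 : G.dist a.1 b.1 ≤ 1 := by
      rcases h.2.1 with he | ha
      · simp [he, SimpleGraph.dist_self]
      · exact le_of_eq (dist_eq_one_iff_adj.mpr ha)
    calc G.dist a.1 c.1 ≤ G.dist a.1 b.1 + G.dist b.1 c.1 := hG.dist_triangle
    _ ≤ 1 + W.length := by omega
    _ = (SimpleGraph.Walk.cons h W).length := by simp [SimpleGraph.Walk.length_cons]; omega

lemma dist_snd_le (hH : H.Connected) {x y : α × β} (W : (strongProd G H).Walk x y) :
    H.dist x.2 y.2 ≤ W.length := by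
  induction W with
  | nil => simp
  | @cons a b c h W ih =>
    have h1 : H.dist a.2 b.2 ≤ 1 := by
      rcases h.2.2 with he | ha
      · simp [he, SimpleGraph.dist_self]
      · exact le_of_eq (dist_eq_one_iff_adj.mpr ha)
    calc H.dist a.2 c.2 ≤ H.dist a.2 b.2 + H.dist b.2 c.2 := hH.dist_triangle
    _ ≤ 1 + W.length := by omega
    _ = (SimpleGraph.Walk.cons h W).length := by simp [SimpleGraph.Walk.length_cons]; omega

lemma walk_right (a : α) {c d : β} (W : H.Walk c d) :
    ∃ Q : (strongProd G H).Walk (a, c) (a, d), Q.length = W.length := by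
  induction W with
  | nil => exact ⟨.nil, rfl⟩
  | @cons c e d h W ih =>
    obtain ⟨Q, hQ⟩ := ih
    have hadj : (strongProd G H).Adj (a, c) (a, e) := ⟨by simp [h.ne], Or.inl rfl, Or.inr h⟩
    exact ⟨.cons hadj Q, by simp [hQ]⟩

lemma walk_left {a b : α} (c : β) (W : G.Walk a b) :
    ∃ Q : (strongProd G H).Walk (a, c) (b, c), Q.length = W.length := by
  induction W with
  | nil => exact ⟨.nil, rfl⟩
  | @cons a e b h W ih =>
    obtain ⟨Q, hQ⟩ := ih
    have hadj : (strongProd G H).Adj (a, c) (e, c) := ⟨by simp [h.ne], Or.inr h, Or.inl rfl⟩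
    exact ⟨.cons hadj Q, by simp [hQ]⟩

lemma walk_pair {a b : α} {c d : β} (W1 : G.Walk a b) (W2 : H.Walk c d) :
    ∃ Q : (strongProd G H).Walk (a, c) (b, d), Q.length = max W1.length W2.length := by
  induction W1 generalizing c W2 with
  | nil =>
    obtain ⟨Q, hQ⟩ := walk_right (G := G) _ W2
    exact ⟨Q, by simp [hQ]⟩
  | @cons a e b h W1 ih =>
    cases W2 with
    | nil =>
      obtain ⟨Q, hQ⟩ := walk_left (H := H) _ (SimpleGraph.Walk.cons h W1)
      exact ⟨Q, by simp [hQ]⟩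
    | @cons c f d h2 W2 =>
      obtain ⟨Q, hQ⟩ := ih W2
      have hadj : (strongProd G H).Adj (a, c) (e, f) :=
        ⟨by simp only [ne_eq, Prod.mk.injEq, not_and]; intro he; exact absurd he h.ne,
          Or.inr h, Or.inr h2⟩
      exact ⟨.cons hadj Q, by simp [hQ, Nat.succ_max_succ]⟩

lemma strongProd_connected (hG : G.Connected) (hH : H.Connected) :
    (strongProd G H).Connected := by
  have : Nonempty (α × β) := ⟨(hG.nonempty.some, hH.nonempty.some)⟩
  rw [SimpleGraph.connected_iff]
  refine ⟨fun x y => ?_, this⟩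
  obtain ⟨W1⟩ := hG x.1 y.1
  obtain ⟨W2⟩ := hH x.2 y.2
  obtain ⟨Q, -⟩ := walk_pair W1 W2
  exact ⟨Q⟩

lemma dist_strongProd (hG : G.Connected) (hH : H.Connected) (x y : α × β) :
    (strongProd G H).dist x y = max (G.dist x.1 y.1) (H.dist x.2 y.2) := by
  refine le_antisymm ?_ ?_
  · obtain ⟨W1, h1⟩ := hG.exists_walk_length_eq_dist x.1 y.1
    obtain ⟨W2, h2⟩ := hH.exists_walk_length_eq_dist x.2 y.2
    obtain ⟨Q, hQ⟩ := walk_pair W1 W2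
    have hd : (strongProd G H).dist x y ≤ Q.length := SimpleGraph.dist_le Q
    omega
  · obtain ⟨W, hW⟩ := (strongProd_connected hG hH).exists_walk_length_eq_dist x y
    have h1 := dist_fst_le hG W
    have h2 := dist_snd_le hH W
    omega

section GeneralLemmas
variable {V : Type*} {G : SimpleGraph V} {u v w x y : V} {S : Set V}

lemma mem_intervalSet {S : Set V} :
    w ∈ intervalSet G S ↔ ∃ u ∈ S, ∃ v ∈ S, G.dist u w + G.dist w v = G.dist u v := by
  simp [intervalSet, interval]

/-- a neighbor of v closer to x, when dist x v > 0 -/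
lemma exists_adj_dist_pred (hc : G.Connected) (h : 0 < G.dist x v) :
    ∃ p, G.Adj v p ∧ G.dist x p + 1 = G.dist x v := by
  obtain ⟨W, hW⟩ := hc.exists_walk_length_eq_dist x v
  have hR : W.reverse.length = G.dist x v := by simp [hW]
  rcases hrev : W.reverse with _ | ⟨hadj, W'⟩
  · rw [hrev] at hR; simp at hR; simp_all
  · rename_i p
    rw [hrev] at hR
    simp [SimpleGraph.Walk.length_cons] at hR
    have h1 : G.dist x p ≤ W'.length := by
      have := SimpleGraph.dist_le W'.reverse
      simpa using this
    have h2 : G.dist x v ≤ G.dist x p + 1 := by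
      have := hc.dist_triangle (u := x) (v := p) (w := v)
      have : G.dist p v ≤ 1 := le_of_eq (dist_eq_one_iff_adj.mpr hadj.symm)
      omega
    exact ⟨p, hadj, by omega⟩

lemma simplicial_interval_endpoint (hc : G.Connected) (hv : IsSimplicial G v)
    (hm : G.dist x v + G.dist v y = G.dist x y) : v = x ∨ v = y := by
  by_contra hcon
  push_neg at hcon
  have hx : 0 < G.dist x v := hc.pos_dist_of_ne (Ne.symm hcon.1)
  have hy : 0 < G.dist v y := hc.pos_dist_of_ne hcon.2
  obtain ⟨p, hp, hpd⟩ := exists_adj_dist_pred hc hx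
  have hy' : 0 < G.dist y v := by rwa [SimpleGraph.dist_comm]
  obtain ⟨q, hq, hqd⟩ := exists_adj_dist_pred hc hy'
  have hqd' : G.dist q y + 1 = G.dist v y := by
    have e1 : G.dist q y = G.dist y q := SimpleGraph.dist_comm
    have e2 : G.dist v y = G.dist y v := SimpleGraph.dist_comm
    omega
  have hpq : p ≠ q := by
    intro he
    subst he
    have := hc.dist_triangle (u := x) (v := p) (w := y)
    omega
  have hadj := hv hp hq hpq
  have t1 := hc.dist_triangle (u := x) (v := p) (w := y)
  have t2 := hc.dist_triangle (u := p) (v := q) (w := y)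
  have : G.dist p q ≤ 1 := le_of_eq (dist_eq_one_iff_adj.mpr hadj)
  omega

lemma self_subset_intervalSet : S ⊆ intervalSet G S := by
  intro v hv
  exact mem_intervalSet.mpr ⟨v, hv, v, hv, by simp [SimpleGraph.dist_self]⟩

lemma geodetic_superset_simplicial (hc : G.Connected) (hS : IsGeodetic G S) :
    {v | IsSimplicial G v} ⊆ S := by
  intro v hv
  have : v ∈ intervalSet G S := by rw [hS]; trivial
  obtain ⟨a, ha, b, hb, hab⟩ := mem_intervalSet.mp this
  rcases simplicial_interval_endpoint hc hv hab with h | h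
  · exact h ▸ ha
  · exact h ▸ hb

lemma hull_superset_simplicial (hc : G.Connected) (hS : IsHullSet G S) :
    {v | IsSimplicial G v} ⊆ S := by
  obtain ⟨r, hr⟩ := hS
  have key : ∀ n (v : V), IsSimplicial G v → v ∈ (intervalSet G)^[n] S → v ∈ S := by
    intro n
    induction n with
    | zero => exact fun v _ h => h
    | succ n ih =>
      intro v hv hmem
      rw [Function.iterate_succ_apply'] at hmem
      obtain ⟨a, ha, b, hb, hab⟩ := mem_intervalSet.mp hmem
      rcases simplicial_interval_endpoint hc hv hab with h | h
      · exact ih v hv (h ▸ ha)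
      · exact ih v hv (h ▸ hb)
  intro v hv
  exact key r v hv (by rw [hr]; trivial)

lemma geodeticNumber_eq_ncard_simplicial [Fintype V] (hc : G.Connected)
    (he : ExtremeGeodesic G) : geodeticNumber G = {v | IsSimplicial G v}.ncard := by
  refine le_antisymm (Nat.sInf_le ⟨_, rfl, he⟩) (le_csInf ⟨_, _, rfl, he⟩ ?_)
  rintro n ⟨S, rfl, hS⟩
  exact Set.ncard_le_ncard (geodetic_superset_simplicial hc hS) S.toFinite

lemma hullNumber_eq_ncard_simplicial [Fintype V] (hc : G.Connected)
    (he : ExtremeGeodesic G) : hullNumber G = {v | IsSimplicial G v}.ncard := by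
  refine le_antisymm (Nat.sInf_le ⟨_, rfl, 1, by simpa [ExtremeGeodesic, IsGeodetic] using he⟩) (le_csInf ⟨_, _, rfl, 1, by simpa [ExtremeGeodesic, IsGeodetic] using he⟩ ?_)
  rintro n ⟨S, rfl, hS⟩
  exact Set.ncard_le_ncard (hull_superset_simplicial hc hS) S.toFinite

end GeneralLemmas

lemma isSimplicial_strongProd_iff {x : α} {s : β} :
    IsSimplicial (strongProd G H) (x, s) ↔ IsSimplicial G x ∧ IsSimplicial H s := by
  constructor
  · intro hp
    constructor
    · intro a b ha hb hab
      have h1 : (strongProd G H).Adj (x, s) (a, s) :=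
        ⟨by simp [ha.ne], Or.inr ha, Or.inl rfl⟩
      have h2 : (strongProd G H).Adj (x, s) (b, s) :=
        ⟨by simp [hb.ne], Or.inr hb, Or.inl rfl⟩
      have := hp h1 h2 (by simp [hab])
      rcases this.2.1 with he | hadj
      · exact absurd he hab
      · exact hadj
    · intro a b ha hb hab
      have h1 : (strongProd G H).Adj (x, s) (x, a) :=
        ⟨by simp [ha.ne], Or.inl rfl, Or.inr ha⟩
      have h2 : (strongProd G H).Adj (x, s) (x, b) :=
        ⟨by simp [hb.ne], Or.inl rfl, Or.inr hb⟩
      have := hp h1 h2 (by simp [hab])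
      rcases this.2.2 with he | hadj
      · exact absurd he hab
      · exact hadj
  · rintro ⟨hx, hs⟩ a b ha hb hab
    refine ⟨hab, ?_, ?_⟩
    · rcases ha.2.1 with h1 | h1 <;> rcases hb.2.1 with h2 | h2
      · exact Or.inl (h1 ▸ h2 ▸ rfl)
      · exact Or.inr (h1 ▸ h2)
      · exact Or.inr (h2 ▸ h1).symm
      · by_cases he : a.1 = b.1
        · exact Or.inl he
        · exact Or.inr (hx h1 h2 he)
    · rcases ha.2.2 with h1 | h1 <;> rcases hb.2.2 with h2 | h2
      · exact Or.inl (h1 ▸ h2 ▸ rfl)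
      · exact Or.inr (h1 ▸ h2)
      · exact Or.inr (h2 ▸ h1).symm
      · by_cases he : a.2 = b.2
        · exact Or.inl he
        · exact Or.inr (hs h1 h2 he)

lemma simplicial_strongProd_set_eq :
    {p : α × β | IsSimplicial (strongProd G H) p} =
      {v | IsSimplicial G v} ×ˢ {v | IsSimplicial H v} := by
  ext ⟨x, s⟩
  simp [isSimplicial_strongProd_iff, Set.mem_prod]

lemma ncard_prod_set {A : Set α} {B : Set β} [Fintype α] [Fintype β] :
    (A ×ˢ B).ncard = A.ncard * B.ncard := by
  rw [← Nat.card_coe_set_eq, ← Nat.card_coe_set_eq, ← Nat.card_coe_set_eq,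
    Nat.card_congr (Equiv.Set.prod A B), Nat.card_prod]

lemma extreme_strongProd (hG : G.Connected) (hH : H.Connected)
    (heG : ExtremeGeodesic G) (heH : ExtremeGeodesic H) :
    ExtremeGeodesic (strongProd G H) := by
  rw [ExtremeGeodesic, IsGeodetic, Set.eq_univ_iff_forall]
  rintro ⟨w1, w2⟩
  have hw1 : w1 ∈ intervalSet G {v | IsSimplicial G v} := by rw [heG]; trivial
  have hw2 : w2 ∈ intervalSet H {v | IsSimplicial H v} := by rw [heH]; trivial
  obtain ⟨u1, hu1, v1, hv1, h1⟩ := mem_intervalSet.mp hw1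
  obtain ⟨u2, hu2, v2, hv2, h2⟩ := mem_intervalSet.mp hw2
  have hD := dist_strongProd hG hH
  have c1 : G.dist w1 u1 = G.dist u1 w1 := SimpleGraph.dist_comm
  have c2 : G.dist w1 v1 = G.dist v1 w1 := SimpleGraph.dist_comm
  have c3 : H.dist w2 u2 = H.dist u2 w2 := SimpleGraph.dist_comm
  have c4 : H.dist w2 v2 = H.dist v2 w2 := SimpleGraph.dist_comm
  have s1 : G.dist u1 u1 = 0 := SimpleGraph.dist_self
  have s2 : G.dist v1 v1 = 0 := SimpleGraph.dist_self
  have s3 : H.dist u2 u2 = 0 := SimpleGraph.dist_self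
  have s4 : H.dist v2 v2 = 0 := SimpleGraph.dist_self
  have hcase : (G.dist u1 w1 ≤ H.dist u2 w2 ∧ G.dist u1 w1 ≤ H.dist w2 v2) ∨
      (G.dist w1 v1 ≤ H.dist u2 w2 ∧ G.dist w1 v1 ≤ H.dist w2 v2) ∨
      (H.dist u2 w2 ≤ G.dist u1 w1 ∧ H.dist u2 w2 ≤ G.dist w1 v1) ∨
      (H.dist w2 v2 ≤ G.dist u1 w1 ∧ H.dist w2 v2 ≤ G.dist w1 v1) := by omega
  rcases hcase with hc | hc | hc | hc
  · refine mem_intervalSet.mpr ⟨(u1, u2), isSimplicial_strongProd_iff.mpr ⟨hu1, hu2⟩,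
      (u1, v2), isSimplicial_strongProd_iff.mpr ⟨hu1, hv2⟩, ?_⟩
    simp only [hD]
    omega
  · refine mem_intervalSet.mpr ⟨(v1, u2), isSimplicial_strongProd_iff.mpr ⟨hv1, hu2⟩,
      (v1, v2), isSimplicial_strongProd_iff.mpr ⟨hv1, hv2⟩, ?_⟩
    simp only [hD]
    omega
  · refine mem_intervalSet.mpr ⟨(u1, u2), isSimplicial_strongProd_iff.mpr ⟨hu1, hu2⟩,
      (v1, u2), isSimplicial_strongProd_iff.mpr ⟨hv1, hu2⟩, ?_⟩
    simp only [hD]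
    omega
  · refine mem_intervalSet.mpr ⟨(u1, v2), isSimplicial_strongProd_iff.mpr ⟨hu1, hv2⟩,
      (v1, v2), isSimplicial_strongProd_iff.mpr ⟨hv1, hv2⟩, ?_⟩
    simp only [hD]
    omega

lemma extreme_fst (hG : G.Connected) (hH : H.Connected)
    (heP : ExtremeGeodesic (strongProd G H)) : ExtremeGeodesic G := by
  -- find a simplicial vertex of H
  obtain ⟨z1⟩ := hG.nonempty
  obtain ⟨z2⟩ := hH.nonempty
  have hz : (z1, z2) ∈ intervalSet (strongProd G H) {p | IsSimplicial (strongProd G H) p} := by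
    rw [heP]; trivial
  obtain ⟨⟨p1, p2⟩, hp, -⟩ := mem_intervalSet.mp hz
  have hs2 : IsSimplicial H p2 := (isSimplicial_strongProd_iff.mp hp).2
  rw [ExtremeGeodesic, IsGeodetic, Set.eq_univ_iff_forall]
  intro w1
  have hw : (w1, p2) ∈ intervalSet (strongProd G H) {p | IsSimplicial (strongProd G H) p} := by
    rw [heP]; trivial
  obtain ⟨⟨u1, u2⟩, hu, ⟨v1, v2⟩, hv, hmax⟩ := mem_intervalSet.mp hw
  obtain ⟨hu1, hu2⟩ := isSimplicial_strongProd_iff.mp hu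
  obtain ⟨hv1, hv2⟩ := isSimplicial_strongProd_iff.mp hv
  rw [dist_strongProd hG hH, dist_strongProd hG hH, dist_strongProd hG hH] at hmax
  simp only at hmax
  have t1 : G.dist u1 v1 ≤ G.dist u1 w1 + G.dist w1 v1 := hG.dist_triangle
  have t2 : H.dist u2 v2 ≤ H.dist u2 p2 + H.dist p2 v2 := hH.dist_triangle
  have key : (G.dist u1 w1 + G.dist w1 v1 = G.dist u1 v1) ∨
      (H.dist u2 p2 + H.dist p2 v2 = H.dist u2 v2) := by omega
  rcases key with key | key
  · exact mem_intervalSet.mpr ⟨u1, hu1, v1, hv1, key⟩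
  · have hzero : H.dist u2 p2 = 0 ∨ H.dist p2 v2 = 0 := by
      rcases simplicial_interval_endpoint hH hs2 key with h | h
      · left; rw [h]; exact SimpleGraph.dist_self
      · right; rw [h]; exact SimpleGraph.dist_self
    have hfin : G.dist u1 w1 + G.dist w1 v1 = G.dist u1 v1 ∨
        G.dist u1 w1 = 0 ∨ G.dist w1 v1 = 0 := by omega
    rcases hfin with h | h | h
    · exact mem_intervalSet.mpr ⟨u1, hu1, v1, hv1, h⟩
    · have : u1 = w1 := hG.dist_eq_zero_iff.mp h
      subst this
      exact mem_intervalSet.mpr ⟨u1, hu1, u1, hu1, by simp [SimpleGraph.dist_self]⟩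
    · have : w1 = v1 := hG.dist_eq_zero_iff.mp h
      subst this
      exact mem_intervalSet.mpr ⟨w1, hv1, w1, hv1, by simp [SimpleGraph.dist_self]⟩

lemma extreme_snd (hG : G.Connected) (hH : H.Connected)
    (heP : ExtremeGeodesic (strongProd G H)) : ExtremeGeodesic H := by
  obtain ⟨z1⟩ := hG.nonempty
  obtain ⟨z2⟩ := hH.nonempty
  have hz : (z1, z2) ∈ intervalSet (strongProd G H) {p | IsSimplicial (strongProd G H) p} := by
    rw [heP]; trivial
  obtain ⟨⟨p1, p2⟩, hp, -⟩ := mem_intervalSet.mp hz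
  have hs1 : IsSimplicial G p1 := (isSimplicial_strongProd_iff.mp hp).1
  rw [ExtremeGeodesic, IsGeodetic, Set.eq_univ_iff_forall]
  intro w2
  have hw : (p1, w2) ∈ intervalSet (strongProd G H) {p | IsSimplicial (strongProd G H) p} := by
    rw [heP]; trivial
  obtain ⟨⟨u1, u2⟩, hu, ⟨v1, v2⟩, hv, hmax⟩ := mem_intervalSet.mp hw
  obtain ⟨hu1, hu2⟩ := isSimplicial_strongProd_iff.mp hu
  obtain ⟨hv1, hv2⟩ := isSimplicial_strongProd_iff.mp hv
  rw [dist_strongProd hG hH, dist_strongProd hG hH, dist_strongProd hG hH] at hmax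
  simp only at hmax
  have t1 : H.dist u2 v2 ≤ H.dist u2 w2 + H.dist w2 v2 := hH.dist_triangle
  have t2 : G.dist u1 v1 ≤ G.dist u1 p1 + G.dist p1 v1 := hG.dist_triangle
  have key : (H.dist u2 w2 + H.dist w2 v2 = H.dist u2 v2) ∨
      (G.dist u1 p1 + G.dist p1 v1 = G.dist u1 v1) := by omega
  rcases key with key | key
  · exact mem_intervalSet.mpr ⟨u2, hu2, v2, hv2, key⟩
  · have hzero : G.dist u1 p1 = 0 ∨ G.dist p1 v1 = 0 := by
      rcases simplicial_interval_endpoint hG hs1 key with h | h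
      · left; rw [h]; exact SimpleGraph.dist_self
      · right; rw [h]; exact SimpleGraph.dist_self
    have hfin : H.dist u2 w2 + H.dist w2 v2 = H.dist u2 v2 ∨
        H.dist u2 w2 = 0 ∨ H.dist w2 v2 = 0 := by omega
    rcases hfin with h | h | h
    · exact mem_intervalSet.mpr ⟨u2, hu2, v2, hv2, h⟩
    · have : u2 = w2 := hH.dist_eq_zero_iff.mp h
      subst this
      exact mem_intervalSet.mpr ⟨u2, hu2, u2, hu2, by simp [SimpleGraph.dist_self]⟩
    · have : w2 = v2 := hH.dist_eq_zero_iff.mp h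
      subst this
      exact mem_intervalSet.mpr ⟨w2, hv2, w2, hv2, by simp [SimpleGraph.dist_self]⟩

end Aux

theorem strongProd_extremeGeodesic_iff {α β : Type*} [Fintype α] [Fintype β]
    (G : SimpleGraph α) (H : SimpleGraph β) (hG : G.Connected) (hH : H.Connected) :
    (ExtremeGeodesic G ∧ ExtremeGeodesic H ↔ ExtremeGeodesic (strongProd G H)) ∧
      (ExtremeGeodesic G → ExtremeGeodesic H →
        geodeticNumber (strongProd G H) = geodeticNumber G * geodeticNumber H ∧
        hullNumber (strongProd G H) = geodeticNumber G * geodeticNumber H) := by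
  refine ⟨⟨fun h => extreme_strongProd hG hH h.1 h.2,
    fun hP => ⟨extreme_fst hG hH hP, extreme_snd hG hH hP⟩⟩, fun hGe hHe => ?_⟩
  have hPc := strongProd_connected hG hH
  have hPe := extreme_strongProd hG hH hGe hHe
  have hcard : {p : α × β | IsSimplicial (strongProd G H) p}.ncard =
      {v | IsSimplicial G v}.ncard * {v | IsSimplicial H v}.ncard := by
    rw [simplicial_strongProd_set_eq, ncard_prod_set]
  rw [geodeticNumber_eq_ncard_simplicial hPc hPe, hullNumber_eq_ncard_simplicial hPc hPe,
    geodeticNumber_eq_ncard_simplicial hG hGe, geodeticNumber_eq_ncard_simplicial hH hHe,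
    hcard]
  exact ⟨rfl, rfl⟩
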